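/- Let G be a simple graph, let e be an edge of G with endpoints u and v, and let Q be a path from u to v in G − e (the graph obtained from G by deleting e). Let x be an internal vertex of Q, and let w₁ and w₂ be the two neighbors of x on Q. For a vertex c, write c ∈ cl(w) (for w ∈ {w₁, w₂}) if c = w or c and w are biconnected in G − e. Then for all distinct vertices a and b adjacent to x in G − e, a and b are biconnected in G if and only if either a and b are biconnected in G − e, or both a ∈ cl(w₁) ∪ cl(w₂) and b ∈ cl(w₁) ∪ cl(w₂). -/

import Mathlib

/-- Two vertices `a` and `b` of a simple graph `H` are *biconnected* in `H` if `a ≠ b` and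
there exist two distinct paths from `a` to `b` in `H` whose only common vertices are
`a` and `b`. -/
def Biconnected {V : Type*} (H : SimpleGraph V) (a b : V) : Prop :=
  a ≠ b ∧ ∃ p q : H.Path a b, p ≠ q ∧
    ∀ x, x ∈ p.1.support → x ∈ q.1.support → (x = a ∨ x = b)

/-- `c ∈ cl(w)` in the graph `H`: `c = w` or `c` and `w` are biconnected in `H`. -/
def InCl {V : Type*} (H : SimpleGraph V) (w c : V) : Prop :=
  c = w ∨ Biconnected H c w

namespace BiconAux

open SimpleGraph Walk

variable {V : Type*} [DecidableEq V]

/-- In a path, an edge incident to the starting vertex must be the first edge. -/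
lemma cons_of_edge {G : SimpleGraph V} {s t c : V} (P : G.Walk s t) (hP : P.IsPath)
    (h : s(s, c) ∈ P.edges) : ∃ (had : G.Adj s c) (P' : G.Walk c t), P = Walk.cons had P' := by
  cases P with
  | nil => simp at h
  | @cons _ w _ had P' =>
    rw [Walk.edges_cons, List.mem_cons] at h
    rcases h with h | h
    · rw [Sym2.eq_iff] at h
      rcases h with ⟨-, rfl⟩ | ⟨hsw, rfl⟩
      · exact ⟨had, P', rfl⟩
      · exact absurd hsw had.ne
    · exact absurd (Walk.fst_mem_support_of_mem_edges P' h)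
        ((Walk.cons_isPath_iff _ _).mp hP).2

/-- In a path, there is at most one edge incident to the starting vertex. -/
lemma edge_unique {G : SimpleGraph V} {s t c d : V} (P : G.Walk s t) (hP : P.IsPath)
    (hc : s(s, c) ∈ P.edges) (hd : s(s, d) ∈ P.edges) : c = d := by
  obtain ⟨had, P', rfl⟩ := cons_of_edge P hP hc
  rw [Walk.edges_cons, List.mem_cons] at hd
  rcases hd with h | h
  · rw [Sym2.eq_iff] at h
    rcases h with ⟨-, h⟩ | ⟨h, rfl⟩
    · exact h.symm
    · exact absurd h had.ne
  · exact absurd (Walk.fst_mem_support_of_mem_edges P' h)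
      ((Walk.cons_isPath_iff _ _).mp hP).2

lemma not_mem_takeUntil {G : SimpleGraph V} {s x w : V} (P : G.Walk s x) (hP : P.IsPath)
    (hw : w ∈ P.support) (hwx : w ≠ x) : x ∉ (P.takeUntil w hw).support := by
  intro hx
  have hnd : ((P.takeUntil w hw).support ++ (P.dropUntil w hw).support.tail).Nodup := by
    rw [← Walk.support_append, P.take_spec hw]
    exact hP.support_nodup
  rw [List.nodup_append] at hnd
  refine hnd.2.2 x hx x ?_ rfl
  have hmem : x ∈ (P.dropUntil w hw).support := Walk.end_mem_support _
  rw [Walk.support_eq_cons] at hmem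
  rcases List.mem_cons.mp hmem with hmem | hmem
  · exact absurd hmem.symm hwx
  · exact hmem

lemma not_mem_dropUntil {G : SimpleGraph V} {x t w : V} (P : G.Walk x t) (hP : P.IsPath)
    (hw : w ∈ P.support) (hwx : w ≠ x) : x ∉ (P.dropUntil w hw).support := by
  intro hx
  have hnd : ((P.takeUntil w hw).support ++ (P.dropUntil w hw).support.tail).Nodup := by
    rw [← Walk.support_append, P.take_spec hw]
    exact hP.support_nodup
  rw [List.nodup_append] at hnd
  refine hnd.2.2 x (Walk.start_mem_support _) x ?_ rfl
  rw [Walk.support_eq_cons] at hx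
  rcases List.mem_cons.mp hx with hx | hx
  · exact absurd hx.symm hwx
  · exact hx

/-- If `a-x` and `x-b` are edges and there is a walk from `a` to `b` avoiding `x`,
then `a` and `b` are biconnected. -/
lemma bicon_of_walk_avoid {G : SimpleGraph V} {a b x : V} (hab : a ≠ b)
    (hax : G.Adj a x) (hxb : G.Adj x b) (W : G.Walk a b) (hW : x ∉ W.support) :
    Biconnected G a b := by
  refine ⟨hab, ⟨Walk.cons hax (Walk.cons hxb Walk.nil), ?_⟩, W.toPath, ?_, ?_⟩
  · simp [Walk.isPath_def, hax.ne, hxb.ne, hab]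
  · intro h
    have hx1 : x ∈ ((W.toPath : G.Path a b) : G.Walk a b).support := by
      rw [← h]; simp
    exact hW (Walk.support_toPath_subset W hx1)
  · intro y hy1 hy2
    simp only [Walk.support_cons, Walk.support_nil, List.mem_cons,
      List.not_mem_nil, or_false, List.mem_singleton] at hy1
    rcases hy1 with rfl | rfl | rfl
    · exact Or.inl rfl
    · exact absurd (Walk.support_toPath_subset W hy2) hW
    · exact Or.inr rfl

/-- Two paths between `a` and `b` both containing the edge `ab` are equal. -/
lemma path_eq_of_edge {G : SimpleGraph V} {a b : V} (r r' : G.Path a b)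
    (h : s(a, b) ∈ r.1.edges) (h' : s(a, b) ∈ r'.1.edges) : r = r' := by
  obtain ⟨had, P, hP⟩ := cons_of_edge r.1 r.2 h
  obtain ⟨had', P', hP'⟩ := cons_of_edge r'.1 r'.2 h'
  have h2 : P = Walk.nil := by
    have hp : (Walk.cons had P).IsPath := hP ▸ r.2
    exact (Walk.isPath_iff_eq_nil (p := P)).mp ((Walk.cons_isPath_iff _ _).mp hp).1
  have h2' : P' = Walk.nil := by
    have hp : (Walk.cons had' P').IsPath := hP' ▸ r'.2
    exact (Walk.isPath_iff_eq_nil (p := P')).mp ((Walk.cons_isPath_iff _ _).mp hp).1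
  apply Subtype.ext
  rw [hP, hP', h2, h2']

/-- Split a path at an occurrence of an edge. -/
lemma split_at_edge {G : SimpleGraph V} {s t u v : V} (P : G.Walk s t) (hP : P.IsPath)
    (h : s(u, v) ∈ P.edges) :
    ∃ (y z : V) (A : G.Walk s y) (had : G.Adj y z) (B : G.Walk z t),
      P = A.append (Walk.cons had B) ∧ s(y, z) = s(u, v) := by
  have hu : u ∈ P.support := Walk.fst_mem_support_of_mem_edges P h
  have hspec := P.take_spec hu
  have hmem : s(u, v) ∈ (P.takeUntil u hu).edges ∨ s(u, v) ∈ (P.dropUntil u hu).edges := by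
    rw [← List.mem_append, ← Walk.edges_append, hspec]; exact h
  rcases hmem with hm | hm
  · have hm' : s(u, v) ∈ (P.takeUntil u hu).reverse.edges := by
      rw [Walk.edges_reverse, List.mem_reverse]; exact hm
    obtain ⟨had, R, hR⟩ := cons_of_edge _ (hP.takeUntil hu).reverse hm'
    refine ⟨v, u, R.reverse, had.symm, P.dropUntil u hu, ?_, Sym2.eq_swap⟩
    have hT : P.takeUntil u hu = R.reverse.append (Walk.cons had.symm Walk.nil) := by
      have h3 := congrArg Walk.reverse hR
      rwa [Walk.reverse_reverse, Walk.reverse_cons] at h3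
    rw [hT] at hspec
    rw [← Walk.append_assoc, Walk.cons_append, Walk.nil_append] at hspec
    exact hspec.symm
  · obtain ⟨had, B, hB⟩ := cons_of_edge _ (hP.dropUntil hu) hm
    rw [hB] at hspec
    exact ⟨u, v, P.takeUntil u hu, had, B, hspec.symm, rfl⟩

lemma transfer_injective {G H : SimpleGraph V} (hle : H ≤ G) {c d : V} {p q : G.Walk c d}
    (hp : ∀ e ∈ p.edges, e ∈ H.edgeSet) (hq : ∀ e ∈ q.edges, e ∈ H.edgeSet)
    (h : p.transfer H hp = q.transfer H hq) : p = q := by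
  have h1 := congrArg (fun W : H.Walk c d =>
    W.transfer G (fun e he => SimpleGraph.edgeSet_mono hle (W.edges_subset_edgeSet he))) h
  simpa [Walk.transfer_transfer, Walk.transfer_self] using h1

end BiconAux

open SimpleGraph Walk

/-- Let `G` be a simple graph, let `e` be an edge of `G` with endpoints `u` and `v`, and
let `Q` be a path from `u` to `v` in `G − e`. Let `x` be an internal vertex of `Q`, and
let `w₁` and `w₂` be the two neighbors of `x` on `Q`. Then for all distinct vertices
`a` and `b` adjacent to `x` in `G − e`, `a` and `b` are biconnected in `G` if and only if
either `a` and `b` are biconnected in `G − e`, or both `a ∈ cl(w₁) ∪ cl(w₂)` and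
`b ∈ cl(w₁) ∪ cl(w₂)`. -/
theorem biconnected_delete_of_internal {V : Type*} (G : SimpleGraph V) (u v : V)
    (he : G.Adj u v)
    (Q : (G.deleteEdges {s(u, v)}).Path u v) (x : V)
    (hxQ : x ∈ Q.1.support) (hxu : x ≠ u) (hxv : x ≠ v)
    (w₁ w₂ : V) (hw : w₁ ≠ w₂)
    (hw₁ : s(x, w₁) ∈ Q.1.edges) (hw₂ : s(x, w₂) ∈ Q.1.edges)
    (a b : V) (hab : a ≠ b)
    (ha : (G.deleteEdges {s(u, v)}).Adj x a)
    (hb : (G.deleteEdges {s(u, v)}).Adj x b) :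
    Biconnected G a b ↔
      (Biconnected (G.deleteEdges {s(u, v)}) a b ∨
        ((InCl (G.deleteEdges {s(u, v)}) w₁ a ∨ InCl (G.deleteEdges {s(u, v)}) w₂ a) ∧
         (InCl (G.deleteEdges {s(u, v)}) w₁ b ∨ InCl (G.deleteEdges {s(u, v)}) w₂ b))) := by
  classical
  let H : SimpleGraph V := G.deleteEdges {s(u, v)}
  have hHdef : H = G.deleteEdges {s(u, v)} := rfl
  have hle : H ≤ G := G.deleteEdges_le _
  have hxa : x ≠ a := ha.ne
  have hxb : x ≠ b := hb.ne
  have hxw1 : H.Adj x w₁ := Q.1.adj_of_mem_edges hw₁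
  have hxw2 : H.Adj x w₂ := Q.1.adj_of_mem_edges hw₂
  -- lifting H-walks to G
  have lift : ∀ {c d : V} (W : H.Walk c d), ∃ W' : G.Walk c d, W'.support = W.support :=
    fun W => ⟨W.transfer G (fun e he' => SimpleGraph.edgeSet_mono hle
      (W.edges_subset_edgeSet he')), Walk.support_transfer _ _⟩
  -- lowering G-walks avoiding the edge to H
  have hHedge : ∀ {c d : V} (W : G.Walk c d), (∀ e ∈ W.edges, e ≠ s(u, v)) →
      ∃ W' : H.Walk c d, W'.support = W.support := by
    intro c d W h
    exact ⟨W.toDeleteEdges _ (fun e he' => by simpa using h e he'),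
      Walk.support_transfer _ _⟩
  -- split Q at x
  have hQP : Q.1.IsPath := Q.2
  have hQspec := Q.1.take_spec hxQ
  have hQ₁P : (Q.1.takeUntil x hxQ).IsPath := hQP.takeUntil hxQ
  have hQ₂P : (Q.1.dropUntil x hxQ).IsPath := hQP.dropUntil hxQ
  have hsplit : ∀ w, s(x, w) ∈ Q.1.edges →
      s(x, w) ∈ (Q.1.takeUntil x hxQ).edges ∨ s(x, w) ∈ (Q.1.dropUntil x hxQ).edges := by
    intro w hw'
    rw [← List.mem_append, ← Walk.edges_append, hQspec]; exact hw'
  have reachU : ∀ w, s(x, w) ∈ (Q.1.takeUntil x hxQ).edges → w ≠ x →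
      ∃ W : H.Walk u w, x ∉ W.support := by
    intro w hmem hwx
    have hws : w ∈ (Q.1.takeUntil x hxQ).support :=
      Walk.snd_mem_support_of_mem_edges _ hmem
    exact ⟨(Q.1.takeUntil x hxQ).takeUntil w hws,
      BiconAux.not_mem_takeUntil _ hQ₁P hws hwx⟩
  have reachV : ∀ w, s(x, w) ∈ (Q.1.dropUntil x hxQ).edges → w ≠ x →
      ∃ W : H.Walk v w, x ∉ W.support := by
    intro w hmem hwx
    have hws : w ∈ (Q.1.dropUntil x hxQ).support :=
      Walk.snd_mem_support_of_mem_edges _ hmem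
    refine ⟨((Q.1.dropUntil x hxQ).dropUntil w hws).reverse, ?_⟩
    rw [Walk.support_reverse, List.mem_reverse]
    exact BiconAux.not_mem_dropUntil _ hQ₂P hws hwx
  have huniq2 : ∀ c d, s(x, c) ∈ (Q.1.dropUntil x hxQ).edges →
      s(x, d) ∈ (Q.1.dropUntil x hxQ).edges → c = d :=
    fun c d h1 h2 => BiconAux.edge_unique _ hQ₂P h1 h2
  have huniq1 : ∀ c d, s(x, c) ∈ (Q.1.takeUntil x hxQ).edges →
      s(x, d) ∈ (Q.1.takeUntil x hxQ).edges → c = d := by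
    intro c d h1 h2
    refine BiconAux.edge_unique (Q.1.takeUntil x hxQ).reverse hQ₁P.reverse ?_ ?_ <;>
      rw [Walk.edges_reverse, List.mem_reverse]
    exacts [h1, h2]
  -- from each endpoint of e, one of w₁, w₂ is reachable avoiding x
  have Mend : ∀ y, (y = u ∨ y = v) →
      ∃ w, (w = w₁ ∨ w = w₂) ∧ ∃ W : H.Walk y w, x ∉ W.support := by
    rintro y (rfl | rfl)
    · rcases hsplit w₁ hw₁ with h1 | h1
      · exact ⟨w₁, Or.inl rfl, reachU w₁ h1 hxw1.ne.symm⟩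
      · rcases hsplit w₂ hw₂ with h2 | h2
        · exact ⟨w₂, Or.inr rfl, reachU w₂ h2 hxw2.ne.symm⟩
        · exact absurd (huniq2 w₁ w₂ h1 h2) hw
    · rcases hsplit w₁ hw₁ with h1 | h1
      · rcases hsplit w₂ hw₂ with h2 | h2
        · exact absurd (huniq1 w₁ w₂ h1 h2) hw
        · exact ⟨w₂, Or.inr rfl, reachV w₂ h2 hxw2.ne.symm⟩
      · exact ⟨w₁, Or.inl rfl, reachV w₁ h1 hxw1.ne.symm⟩
  -- each wᵢ reaches an endpoint of e avoiding x
  have Lw : ∀ w, s(x, w) ∈ Q.1.edges → w ≠ x →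
      ∃ y, (y = u ∨ y = v) ∧ ∃ W : H.Walk w y, x ∉ W.support := by
    intro w hmem hwx
    rcases hsplit w hmem with h | h
    · obtain ⟨W, hW⟩ := reachU w h hwx
      exact ⟨u, Or.inl rfl, W.reverse, by
        rw [Walk.support_reverse, List.mem_reverse]; exact hW⟩
    · obtain ⟨W, hW⟩ := reachV w h hwx
      exact ⟨v, Or.inr rfl, W.reverse, by
        rw [Walk.support_reverse, List.mem_reverse]; exact hW⟩
  have bridge : ∀ y y', (y = u ∨ y = v) → (y' = u ∨ y' = v) →
      ∃ W : G.Walk y y', x ∉ W.support := by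
    rintro y y' (rfl | rfl) (rfl | rfl)
    · exact ⟨Walk.nil, by simp [hxu]⟩
    · exact ⟨Walk.cons he Walk.nil, by simp [hxu, hxv]⟩
    · exact ⟨Walk.cons he.symm Walk.nil, by simp [hxu, hxv]⟩
    · exact ⟨Walk.nil, by simp [hxv]⟩
  -- conclusion helper for the forward direction
  have concl : ∀ c w, H.Adj x c → (w = w₁ ∨ w = w₂) →
      (∃ W : H.Walk c w, x ∉ W.support) → (InCl H w₁ c ∨ InCl H w₂ c) := by
    intro c w hxc hworw hW
    obtain ⟨W, hW⟩ := hW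
    have hIn : InCl H w c := by
      by_cases hcw : c = w
      · exact Or.inl hcw
      · refine Or.inr (BiconAux.bicon_of_walk_avoid hcw hxc.symm ?_ W hW)
        rcases hworw with rfl | rfl
        · exact hxw1
        · exact hxw2
    rcases hworw with rfl | rfl
    · exact Or.inl hIn
    · exact Or.inr hIn
  -- from `InCl` get a walk avoiding x
  have clwalk : ∀ c w, x ≠ c → x ≠ w → InCl H w c → ∃ W : H.Walk c w, x ∉ W.support := by
    rintro c w hxc hxw (rfl | ⟨hne, P, P', hPP, hsh'⟩)
    · exact ⟨Walk.nil, by simpa using hxw⟩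
    · by_cases hxP : x ∈ P.1.support
      · refine ⟨P'.1, fun hx => ?_⟩
        rcases hsh' x hxP hx with h | h
        · exact hxc h
        · exact hxw h
      · exact ⟨P.1, hxP⟩
  -- core of the forward direction
  have core : ∀ p q : G.Path a b,
      (∀ y, y ∈ p.1.support → y ∈ q.1.support → y = a ∨ y = b) →
      s(u, v) ∈ p.1.edges → s(u, v) ∉ q.1.edges →
      (InCl H w₁ a ∨ InCl H w₂ a) ∧ (InCl H w₁ b ∨ InCl H w₂ b) := by
    intro p q hsh hep heq
    obtain ⟨y, z, A, had, B, hPeq, hyz⟩ := BiconAux.split_at_edge p.1 p.2 hep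
    have hyor : y = u ∨ y = v := by
      rw [Sym2.eq_iff] at hyz; tauto
    have hzor : z = u ∨ z = v := by
      rw [Sym2.eq_iff] at hyz; tauto
    have hsupp : p.1.support = A.support ++ B.support := by
      rw [hPeq, Walk.support_append, Walk.support_cons]
      simp
    have hnodup : (A.support ++ B.support).Nodup := by
      rw [← hsupp]; exact p.2.support_nodup
    rw [List.nodup_append] at hnodup
    have hedup : (A.edges ++ s(y, z) :: B.edges).Nodup := by
      rw [← Walk.edges_cons had, ← Walk.edges_append, ← hPeq]
      exact p.2.isTrail.edges_nodup
    rw [List.nodup_append] at hedup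
    have heS : s(y, z) ∉ A.edges := fun h => hedup.2.2 _ h _ List.mem_cons_self rfl
    have heB : s(y, z) ∉ B.edges := (List.nodup_cons.mp hedup.2.1).1
    obtain ⟨AH, hAH⟩ := hHedge A (fun e h hh => heS ((hh.trans hyz.symm) ▸ h))
    obtain ⟨BH, hBH⟩ := hHedge B (fun e h hh => heB ((hh.trans hyz.symm) ▸ h))
    obtain ⟨qH, hqH⟩ := hHedge q.1 (fun e h hh => heq (hh ▸ h))
    have hxAB : ¬(x ∈ A.support ∧ x ∈ B.support) := fun h => hnodup.2.2 x h.1 x h.2 rfl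
    have hxpq : x ∈ p.1.support → x ∉ q.1.support := by
      intro hxp hxq
      rcases hsh x hxp hxq with h | h
      · exact hxa h
      · exact hxb h
    obtain ⟨wy, hwy, Wy, hWy⟩ := Mend y hyor
    obtain ⟨wz, hwz, Wz, hWz⟩ := Mend z hzor
    constructor
    · by_cases hxA : x ∈ A.support
      · have hxq : x ∉ q.1.support := hxpq (by rw [hsupp]; exact List.mem_append_left _ hxA)
        have hxB : x ∉ B.support := fun h => hxAB ⟨hxA, h⟩
        refine concl a wz ha hwz ⟨qH.append (BH.reverse.append Wz), ?_⟩
        rw [Walk.mem_support_append_iff, Walk.mem_support_append_iff,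
          Walk.support_reverse, List.mem_reverse, hqH, hBH]
        push_neg
        exact ⟨hxq, hxB, hWz⟩
      · refine concl a wy ha hwy ⟨AH.append Wy, ?_⟩
        rw [Walk.mem_support_append_iff, hAH]
        push_neg
        exact ⟨hxA, hWy⟩
    · by_cases hxB : x ∈ B.support
      · have hxq : x ∉ q.1.support := hxpq (by rw [hsupp]; exact List.mem_append_right _ hxB)
        have hxA : x ∉ A.support := fun h => hxAB ⟨h, hxB⟩
        refine concl b wy hb hwy ⟨qH.reverse.append (AH.append Wy), ?_⟩
        rw [Walk.mem_support_append_iff, Walk.mem_support_append_iff,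
          Walk.support_reverse, List.mem_reverse, hqH, hAH]
        push_neg
        exact ⟨hxq, hxA, hWy⟩
      · refine concl b wz hb hwz ⟨BH.reverse.append Wz, ?_⟩
        rw [Walk.mem_support_append_iff, Walk.support_reverse, List.mem_reverse, hBH]
        push_neg
        exact ⟨hxB, hWz⟩
  constructor
  · rintro ⟨hne, p, q, hpq, hsh⟩
    have hnotboth : ¬(s(u, v) ∈ p.1.edges ∧ s(u, v) ∈ q.1.edges) := by
      rintro ⟨h1, h2⟩
      have hu1 := Walk.fst_mem_support_of_mem_edges p.1 h1
      have hv1 := Walk.snd_mem_support_of_mem_edges p.1 h1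
      have hu2 := Walk.fst_mem_support_of_mem_edges q.1 h2
      have hv2 := Walk.snd_mem_support_of_mem_edges q.1 h2
      rcases hsh u hu1 hu2 with rfl | rfl <;> rcases hsh v hv1 hv2 with rfl | rfl
      · exact he.ne rfl
      · exact hpq (BiconAux.path_eq_of_edge p q h1 h2)
      · rw [Sym2.eq_swap] at h1 h2
        exact hpq (BiconAux.path_eq_of_edge p q h1 h2)
      · exact he.ne rfl
    by_cases hep : s(u, v) ∈ p.1.edges
    · have heq : s(u, v) ∉ q.1.edges := fun h => hnotboth ⟨hep, h⟩
      exact Or.inr (core p q hsh hep heq)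
    · by_cases heq : s(u, v) ∈ q.1.edges
      · exact Or.inr (core q p (fun y h1 h2 => hsh y h2 h1) heq hep)
      · left
        have hpe : ∀ e ∈ p.1.edges, e ∈ H.edgeSet := by
          intro e h
          rw [hHdef, SimpleGraph.edgeSet_deleteEdges]
          exact ⟨p.1.edges_subset_edgeSet h, by
            simp only [Set.mem_singleton_iff]; rintro rfl; exact hep h⟩
        have hqe : ∀ e ∈ q.1.edges, e ∈ H.edgeSet := by
          intro e h
          rw [hHdef, SimpleGraph.edgeSet_deleteEdges]
          exact ⟨q.1.edges_subset_edgeSet h, by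
            simp only [Set.mem_singleton_iff]; rintro rfl; exact heq h⟩
        refine ⟨hab, ⟨p.1.transfer H hpe, ?_⟩, ⟨q.1.transfer H hqe, ?_⟩, ?_, ?_⟩
        · rw [Walk.isPath_def, Walk.support_transfer]
          exact p.2.support_nodup
        · rw [Walk.isPath_def, Walk.support_transfer]
          exact q.2.support_nodup
        · intro hcon
          exact hpq (Subtype.ext (BiconAux.transfer_injective hle hpe hqe
            (Subtype.mk_eq_mk.mp hcon)))
        · intro y hy1 hy2
          rw [Walk.support_transfer] at hy1 hy2
          exact hsh y hy1 hy2
  · rintro (⟨hne, p, q, hpq, hsh⟩ | ⟨hca, hcb⟩)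
    · have hxav : x ∉ p.1.support ∨ x ∉ q.1.support := by
        by_contra hcon
        push_neg at hcon
        rcases hsh x hcon.1 hcon.2 with h | h
        · exact hxa h
        · exact hxb h
      obtain ⟨W, hW⟩ : ∃ W : H.Walk a b, x ∉ W.support := by
        rcases hxav with h | h
        exacts [⟨p.1, h⟩, ⟨q.1, h⟩]
      obtain ⟨W', hW'⟩ := lift W
      exact BiconAux.bicon_of_walk_avoid hab (hle ha.symm) (hle hb) W'
        (by rw [hW']; exact hW)
    · obtain ⟨wa, hwa, Wa, hWa⟩ : ∃ w, (w = w₁ ∨ w = w₂) ∧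
          ∃ W : H.Walk a w, x ∉ W.support := by
        rcases hca with h | h
        · exact ⟨w₁, Or.inl rfl, clwalk a w₁ hxa hxw1.ne h⟩
        · exact ⟨w₂, Or.inr rfl, clwalk a w₂ hxa hxw2.ne h⟩
      obtain ⟨wb, hwb, Wb, hWb⟩ : ∃ w, (w = w₁ ∨ w = w₂) ∧
          ∃ W : H.Walk b w, x ∉ W.support := by
        rcases hcb with h | h
        · exact ⟨w₁, Or.inl rfl, clwalk b w₁ hxb hxw1.ne h⟩
        · exact ⟨w₂, Or.inr rfl, clwalk b w₂ hxb hxw2.ne h⟩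
      obtain ⟨ya, hya, Wya, hWya⟩ := Lw wa
        (by rcases hwa with rfl | rfl; exacts [hw₁, hw₂])
        (by rcases hwa with rfl | rfl; exacts [hxw1.ne.symm, hxw2.ne.symm])
      obtain ⟨yb, hyb, Wyb, hWyb⟩ := Lw wb
        (by rcases hwb with rfl | rfl; exacts [hw₁, hw₂])
        (by rcases hwb with rfl | rfl; exacts [hxw1.ne.symm, hxw2.ne.symm])
      obtain ⟨Wbr, hWbr⟩ := bridge ya yb hya hyb
      obtain ⟨Wa', hWa'⟩ := lift (Wa.append Wya)
      obtain ⟨Wb', hWb'⟩ := lift (Wb.append Wyb)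
      refine BiconAux.bicon_of_walk_avoid hab (hle ha.symm) (hle hb)
        (Wa'.append (Wbr.append Wb'.reverse)) ?_
      rw [Walk.mem_support_append_iff, Walk.mem_support_append_iff,
        Walk.support_reverse, List.mem_reverse, hWa', hWb']
      push_neg
      refine ⟨?_, hWbr, ?_⟩ <;>
        · rw [Walk.mem_support_append_iff]
          push_neg
          constructor <;> assumption
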